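/- For every q ≥ 2 there is a constant C > 0 such that for every n ≥ 2 and every finite set A with |A| = q, there exist m ≥ n and an n-universal transformation f : A^m → A^m whose time satisfies t_f ≤ q^n + C·n. -/

import Mathlib

/-- The instruction of `A^m` induced by the `i`-th coordinate function of `f`. -/
def instr {A : Type*} {m : ℕ} (f : (Fin m → A) → Fin m → A) (i : Fin m) :
    (Fin m → A) → Fin m → A :=
  fun x => Function.update x i (f x i)

/-- Apply a list of induced instructions of `f`, first element of the list first. -/
def applyInstrs {A : Type*} {m : ℕ} (f : (Fin m → A) → Fin m → A) :
    List (Fin m) → (Fin m → A) → Fin m → A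
  | [], x => x
  | i :: l, x => applyInstrs f l (instr f i x)

/-- Projection of `A^m` onto the first `n` coordinates. -/
def pr {A : Type*} {m n : ℕ} (hmn : n ≤ m) (x : Fin m → A) : Fin n → A :=
  fun i => x (Fin.castLE hmn i)

lemma applyInstrs_append {A : Type*} {m : ℕ} (f : (Fin m → A) → Fin m → A)
    (l1 l2 : List (Fin m)) (x : Fin m → A) :
    applyInstrs f (l1 ++ l2) x = applyInstrs f l2 (applyInstrs f l1 x) := by
  induction l1 generalizing x with
  | nil => rfl
  | cons c t ih => simp [applyInstrs, ih]

/-- If a list of pairwise distinct coordinates is fired, and each fired coordinate's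
function reads only coordinates outside the list plus possibly itself, the result is
as if each coordinate is computed from the initial state. -/
lemma applyInstrs_spec {A : Type*} {m : ℕ} (f : (Fin m → A) → Fin m → A)
    (l : List (Fin m)) (hn : l.Nodup)
    (hread : ∀ c ∈ l, ∀ z z' : Fin m → A,
      (∀ d, d ∉ l → z d = z' d) → z c = z' c → f z c = f z' c)
    (x : Fin m → A) :
    applyInstrs f l x = fun d => if d ∈ l then f x d else x d := by
  induction l generalizing x with
  | nil => funext d; simp [applyInstrs]
  | cons c t ih =>
    obtain ⟨hct, hnt⟩ := List.nodup_cons.mp hn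
    have hread' : ∀ c' ∈ t, ∀ z z' : Fin m → A,
        (∀ d, d ∉ t → z d = z' d) → z c' = z' c' → f z c' = f z' c' := by
      intro c' hc' z z' hag hcc
      exact hread c' (List.mem_cons_of_mem _ hc') z z'
        (fun d hd => hag d (fun hdt => hd (List.mem_cons_of_mem _ hdt))) hcc
    have step : applyInstrs f (c :: t) x = applyInstrs f t (Function.update x c (f x c)) := rfl
    rw [step, ih hnt hread']
    funext d
    by_cases hdt : d ∈ t
    · have hdc : d ≠ c := fun h => hct (h ▸ hdt)
      rw [if_pos hdt, if_pos (List.mem_cons_of_mem _ hdt)]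
      exact hread d (List.mem_cons_of_mem _ hdt) _ x
        (fun e he => Function.update_of_ne (fun h => he (by rw [h]; exact List.mem_cons_self)) _ x)
        (Function.update_of_ne hdc _ x)
    · by_cases hdc : d = c
      · subst hdc
        rw [if_neg hdt, if_pos List.mem_cons_self]
        exact Function.update_self _ _ _
      · rw [if_neg hdt, if_neg (by simp [List.mem_cons, hdc, hdt])]
        exact Function.update_of_ne hdc _ _

section Constr

variable (q n : ℕ) (A : Type) [Fintype A] [DecidableEq A]

abbrev Pn : Type := (Fin n → A) × (Fin n → A)

noncomputable def ePn : Pn n A ≃ Fin (Fintype.card (Pn n A)) := Fintype.equivFin _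

def Mdim : ℕ := n + n + Fintype.card (Pn n A)

def outC (i : Fin n) : Fin (Mdim n A) :=
  ⟨i.val, by have := i.isLt; unfold Mdim; omega⟩

def snapC (i : Fin n) : Fin (Mdim n A) :=
  ⟨n + i.val, by have := i.isLt; unfold Mdim; omega⟩

noncomputable def bankC (p : Pn n A) : Fin (Mdim n A) :=
  ⟨n + n + (ePn n A p).val, by have := (ePn n A p).isLt; unfold Mdim; omega⟩

@[simp] lemma outC_val (i : Fin n) : (outC n A i).val = i.val := rfl
@[simp] lemma snapC_val (i : Fin n) : (snapC n A i).val = n + i.val := rfl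
@[simp] lemma bankC_val (p : Pn n A) : (bankC n A p).val = n + n + (ePn n A p).val := rfl

lemma bankC_injective : Function.Injective (bankC n A) := by
  intro p p' h
  have h1 := congrArg Fin.val h
  simp only [bankC_val] at h1
  have : ePn n A p = ePn n A p' := Fin.ext (by omega)
  exact (ePn n A).injective this

noncomputable def bigF (ε : A ≃ ZMod q) : (Fin (Mdim n A) → A) → Fin (Mdim n A) → A :=
  fun x c =>
    if h1 : c.val < n then
      ε.symm ((∑ p : Pn n A, ε (p.2 ⟨c.val, h1⟩) * ε (x (bankC n A p)))
        - ε (x (snapC n A ⟨c.val, h1⟩)))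
    else if h2 : c.val < n + n then
      ε.symm (∑ p : Pn n A, ε (p.2 ⟨c.val - n, by omega⟩) * ε (x (bankC n A p)))
    else
      ε.symm (ε (x c) +
        if (fun i => x (outC n A i)) = ((ePn n A).symm ⟨c.val - (n + n), by
            have := c.isLt; unfold Mdim at this; omega⟩).1 then 1 else 0)

lemma bigF_out (ε : A ≃ ZMod q) (x : Fin (Mdim n A) → A) (i : Fin n) :
    bigF q n A ε x (outC n A i)
      = ε.symm ((∑ p : Pn n A, ε (p.2 i) * ε (x (bankC n A p)))
          - ε (x (snapC n A i))) := by
  have hi : (outC n A i).val < n := i.isLt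
  rw [show bigF q n A ε x (outC n A i) = _ from dif_pos hi]
  simp

lemma bigF_snap (ε : A ≃ ZMod q) (x : Fin (Mdim n A) → A) (i : Fin n) :
    bigF q n A ε x (snapC n A i)
      = ε.symm (∑ p : Pn n A, ε (p.2 i) * ε (x (bankC n A p))) := by
  have h1 : ¬ (snapC n A i).val < n := by simp
  have h2 : (snapC n A i).val < n + n := by
    have := i.isLt; simp only [snapC_val]; omega
  rw [show bigF q n A ε x (snapC n A i) = _ from dif_neg h1]
  rw [dif_pos h2]
  have hidx : ∀ (h : (snapC n A i).val - n < n),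
      (⟨(snapC n A i).val - n, h⟩ : Fin n) = i := fun h =>
    Fin.ext (by simp only [snapC_val]; omega)
  simp only [hidx]

lemma bigF_bank (ε : A ≃ ZMod q) (x : Fin (Mdim n A) → A) (p : Pn n A) :
    bigF q n A ε x (bankC n A p)
      = ε.symm (ε (x (bankC n A p)) +
          if (fun i => x (outC n A i)) = p.1 then 1 else 0) := by
  have h1 : ¬ (bankC n A p).val < n := by simp only [bankC_val]; omega
  have h2 : ¬ (bankC n A p).val < n + n := by simp only [bankC_val]; omega
  rw [show bigF q n A ε x (bankC n A p) = _ from dif_neg h1]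
  rw [dif_neg h2]
  have hd : (⟨(bankC n A p).val - (n + n), by
      have := (bankC n A p).isLt; unfold Mdim at this; omega⟩ : Fin (Fintype.card (Pn n A)))
      = ePn n A p := Fin.ext (by simp)
  rw [hd, Equiv.symm_apply_apply]

end Constr

/-- For every `q ≥ 2` there is `C > 0` such that for every `n ≥ 2` and finite `A` with
`|A| = q`, there exist `m ≥ n` and an `n`-universal transformation of `A^m` with time
at most `q^n + C·n`. -/
theorem universal_time_qn (q : ℕ) (hq : 2 ≤ q) :
    ∃ C : ℕ, 0 < C ∧
      ∀ (n : ℕ), 2 ≤ n → ∀ (A : Type) [Fintype A], Fintype.card A = q →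
        ∃ (m : ℕ) (hmn : n ≤ m) (f : (Fin m → A) → Fin m → A),
          ∀ g : (Fin n → A) → Fin n → A,
            ∃ l : List (Fin m), l ≠ [] ∧ l.length ≤ q ^ n + C * n ∧
              ∀ x, g (pr hmn x) = pr hmn (applyInstrs f l x) := by
  refine ⟨2, by norm_num, ?_⟩
  intro n hn A _ hA
  letI : DecidableEq A := Classical.decEq A
  haveI : NeZero q := ⟨by omega⟩
  obtain ⟨ε⟩ : Nonempty (A ≃ ZMod q) :=
    ⟨Fintype.equivOfCardEq (by rw [hA, ZMod.card])⟩
  refine ⟨Mdim n A, by unfold Mdim; omega, bigF q n A ε, ?_⟩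
  intro g
  set eV := Fintype.equivFin (Fin n → A) with heV
  set lsnap : List (Fin (Mdim n A)) := List.ofFn (fun i : Fin n => snapC n A i) with hlsnap
  set lbank : List (Fin (Mdim n A)) := List.ofFn
    (fun k : Fin (Fintype.card (Fin n → A)) => bankC n A (eV.symm k, g (eV.symm k))) with hlbank
  set lout : List (Fin (Mdim n A)) := List.ofFn (fun i : Fin n => outC n A i) with hlout
  -- membership facts
  have hbs : ∀ p : Pn n A, bankC n A p ∉ lsnap := by
    intro p hp
    rw [hlsnap, List.mem_ofFn] at hp
    obtain ⟨i, hi⟩ := hp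
    have h1 := congrArg Fin.val hi
    have h2 := i.isLt
    simp only [snapC_val, bankC_val] at h1
    omega
  have hos : ∀ i : Fin n, outC n A i ∉ lsnap := by
    intro i hp
    rw [hlsnap, List.mem_ofFn] at hp
    obtain ⟨j, hj⟩ := hp
    have h1 := congrArg Fin.val hj
    have h2 := i.isLt
    simp only [snapC_val, outC_val] at h1
    omega
  have hob : ∀ i : Fin n, outC n A i ∉ lbank := by
    intro i hp
    rw [hlbank, List.mem_ofFn] at hp
    obtain ⟨k, hk⟩ := hp
    have h1 := congrArg Fin.val hk
    have h2 := i.isLt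
    simp only [bankC_val, outC_val] at h1
    omega
  have hsb : ∀ i : Fin n, snapC n A i ∉ lbank := by
    intro i hp
    rw [hlbank, List.mem_ofFn] at hp
    obtain ⟨k, hk⟩ := hp
    have h1 := congrArg Fin.val hk
    have h2 := i.isLt
    simp only [bankC_val, snapC_val] at h1
    omega
  have hbo : ∀ p : Pn n A, bankC n A p ∉ lout := by
    intro p hp
    rw [hlout, List.mem_ofFn] at hp
    obtain ⟨i, hi⟩ := hp
    have h1 := congrArg Fin.val hi
    have h2 := i.isLt
    simp only [outC_val, bankC_val] at h1
    omega
  have hso : ∀ i : Fin n, snapC n A i ∉ lout := by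
    intro i hp
    rw [hlout, List.mem_ofFn] at hp
    obtain ⟨j, hj⟩ := hp
    have h1 := congrArg Fin.val hj
    have h2 := j.isLt
    simp only [outC_val, snapC_val] at h1
    omega
  -- nodup facts
  have hns : lsnap.Nodup := by
    rw [hlsnap]
    refine List.nodup_ofFn.mpr ?_
    intro i j h
    have := congrArg Fin.val h
    simp only [snapC_val] at this
    exact Fin.ext (by omega)
  have hnb : lbank.Nodup := by
    rw [hlbank]
    refine List.nodup_ofFn.mpr ?_
    intro k k' h
    have := bankC_injective n A h
    have h1 : eV.symm k = eV.symm k' := congrArg Prod.fst this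
    exact eV.symm.injective h1
  have hno : lout.Nodup := by
    rw [hlout]
    refine List.nodup_ofFn.mpr ?_
    intro i j h
    have := congrArg Fin.val h
    simp only [outC_val] at this
    exact Fin.ext this
  refine ⟨lsnap ++ lbank ++ lout, ?_, ?_, ?_⟩
  · intro h
    have := congrArg List.length h
    simp only [List.length_append, List.length_ofFn, List.length_nil, hlsnap, hlbank,
      hlout] at this
    omega
  · have hcV : Fintype.card (Fin n → A) = q ^ n := by
      simp [hA]
    simp only [List.length_append, List.length_ofFn, hlsnap, hlbank, hlout, hcV]
    omega
  · intro x
    set F := bigF q n A ε with hF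
    -- phase 1
    have hx1 : applyInstrs F lsnap x = fun d => if d ∈ lsnap then F x d else x d := by
      refine applyInstrs_spec F lsnap hns ?_ x
      intro c hc z z' hag hcz
      rw [hlsnap, List.mem_ofFn] at hc
      obtain ⟨i, rfl⟩ := hc
      rw [hF, bigF_snap, bigF_snap]
      congr 1
      refine Finset.sum_congr rfl ?_
      intro p _
      rw [hag _ (hbs p)]
    set x1 : Fin (Mdim n A) → A := fun d => if d ∈ lsnap then F x d else x d with hx1d
    -- phase 2
    have hx2 : applyInstrs F lbank x1 = fun d => if d ∈ lbank then F x1 d else x1 d := by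
      refine applyInstrs_spec F lbank hnb ?_ x1
      intro c hc z z' hag hcz
      rw [hlbank, List.mem_ofFn] at hc
      obtain ⟨k, rfl⟩ := hc
      rw [hF, bigF_bank, bigF_bank]
      have hout : (fun i => z (outC n A i)) = (fun i => z' (outC n A i)) :=
        funext fun i => hag _ (hob i)
      rw [hout, hcz]
    set x2 : Fin (Mdim n A) → A := fun d => if d ∈ lbank then F x1 d else x1 d with hx2d
    -- phase 3
    have hx3 : applyInstrs F lout x2 = fun d => if d ∈ lout then F x2 d else x2 d := by
      refine applyInstrs_spec F lout hno ?_ x2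
      intro c hc z z' hag hcz
      rw [hlout, List.mem_ofFn] at hc
      obtain ⟨i, rfl⟩ := hc
      rw [hF, bigF_out, bigF_out]
      congr 2
      · refine Finset.sum_congr rfl ?_
        intro p _
        rw [hag _ (hbo p)]
      · rw [hag _ (hso i)]
    have happ : applyInstrs F (lsnap ++ lbank ++ lout) x
        = fun d => if d ∈ lout then F x2 d else x2 d := by
      rw [applyInstrs_append, applyInstrs_append, hx1, hx2, hx3]
    -- the values
    set ufun : Fin n → A := fun i => x (outC n A i) with hufun
    have hx1out : ∀ i : Fin n, x1 (outC n A i) = x (outC n A i) := by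
      intro i; rw [hx1d]; simp only [if_neg (hos i)]
    have hx1bank : ∀ p : Pn n A, x1 (bankC n A p) = x (bankC n A p) := by
      intro p; rw [hx1d]; simp only [if_neg (hbs p)]
    have hx2snapv : ∀ i : Fin n, ε (x2 (snapC n A i))
        = ∑ p : Pn n A, ε (p.2 i) * ε (x (bankC n A p)) := by
      intro i
      have hmem : snapC n A i ∈ lsnap := by
        rw [hlsnap, List.mem_ofFn]; exact ⟨i, rfl⟩
      rw [hx2d]
      simp only [if_neg (hsb i)]
      rw [hx1d]
      simp only [if_pos hmem]
      rw [hF, bigF_snap, Equiv.apply_symm_apply]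
    have hx2bankv : ∀ p : Pn n A, ε (x2 (bankC n A p))
        = ε (x (bankC n A p)) +
          (if p.2 = g p.1 ∧ ufun = p.1 then 1 else 0) := by
      intro p
      by_cases hpg : p.2 = g p.1
      · have hmem : bankC n A p ∈ lbank := by
          rw [hlbank, List.mem_ofFn]
          refine ⟨eV p.1, ?_⟩
          show bankC n A (eV.symm (eV p.1), g (eV.symm (eV p.1))) = bankC n A p
          rw [Equiv.symm_apply_apply, ← hpg]
        rw [hx2d]
        simp only [if_pos hmem]
        rw [hF, bigF_bank, Equiv.apply_symm_apply, hx1bank]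
        congr 1
        have hof : (fun i => x1 (outC n A i)) = ufun := funext fun i => hx1out i
        rw [hof]
        simp only [hpg, true_and]
      · have hmem : bankC n A p ∉ lbank := by
          intro h
          rw [hlbank, List.mem_ofFn] at h
          obtain ⟨k, hk⟩ := h
          have := bankC_injective n A hk
          apply hpg
          rw [← this]
        rw [hx2d]
        simp only [if_neg hmem]
        rw [hx1bank]
        simp only [hpg, false_and, if_false, add_zero]
    -- final
    funext i
    have hcast : Fin.castLE (show n ≤ Mdim n A by unfold Mdim; omega) i = outC n A i :=
      Fin.ext rfl
    have hpr : pr (show n ≤ Mdim n A by unfold Mdim; omega) x = ufun :=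
      funext fun j => congrArg x (Fin.ext rfl)
    rw [happ, pr, hcast]
    have hmem : outC n A i ∈ lout := by
      rw [hlout, List.mem_ofFn]; exact ⟨i, rfl⟩
    simp only [if_pos hmem]
    rw [hF, bigF_out]
    have hsum : (∑ p : Pn n A, ε (p.2 i) * ε (x2 (bankC n A p)))
        = (∑ p : Pn n A, ε (p.2 i) * ε (x (bankC n A p))) + ε (g ufun i) := by
      have : ∀ p : Pn n A, ε (p.2 i) * ε (x2 (bankC n A p))
          = ε (p.2 i) * ε (x (bankC n A p))
            + (if p = (ufun, g ufun) then ε (p.2 i) else 0) := by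
        intro p
        rw [hx2bankv p, mul_add]
        congr 1
        rw [mul_ite, mul_one, mul_zero]
        refine if_congr ?_ rfl rfl
        constructor
        · rintro ⟨h1, h2⟩
          refine Prod.ext h2.symm ?_
          rw [h1, ← h2]
        · rintro rfl
          exact ⟨rfl, rfl⟩
      rw [Finset.sum_congr rfl (fun p _ => this p), Finset.sum_add_distrib]
      congr 1
      rw [Finset.sum_ite_eq' Finset.univ ((ufun, g ufun) : Pn n A) (fun p => ε (p.2 i))]
      simp
    rw [hsum, hx2snapv i, add_sub_cancel_left, Equiv.symm_apply_apply, hpr]
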